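/- Let S be a finite set and A : S × S → ℝ a matrix with A(i,j) ≥ 0 for all i ≠ j and Σ_j A(i,j) ≤ 0 for all i (a substochastic generator matrix). Let D ⊆ S and suppose u : S → ℝ satisfies u ≥ 0 and (A u)(i) = −1_{i ∈ D} for all i ∈ S. Let g : [0,∞) → ℝ^S be continuous with g_t(i) = 0 whenever i ∉ D, and let φ : [0,∞) → ℝ^S be differentiable with φ'_t = A φ_t + g_t for all t ≥ 0. Then for every t ≥ 0, max_{i ∈ S} |φ_t(i)| ≤ max_{i ∈ S} |φ_0(i)| + ( sup_{0 ≤ s ≤ t} max_{i ∈ D} |g_s(i)| )·max_{i ∈ S} u(i). -/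

import Mathlib

open Set Topology

/-- If `f` hits `0` at time `t > 0` from below (on `[0,t)` it is `≤ 0`), then its
derivative within `[0,∞)` at `t` is nonnegative. -/
lemma deriv_nonneg_of_hit (f : ℝ → ℝ) (t : ℝ) (ht : 0 < t) (d : ℝ)
    (hf : HasDerivWithinAt f d (Set.Ici 0) t) (hft : f t = 0)
    (hle : ∀ s ∈ Set.Ico 0 t, f s ≤ 0) : 0 ≤ d := by
  have hsub : Set.Ico (0 : ℝ) t ⊆ Set.Ici 0 := fun x hx => hx.1
  have h2 : HasDerivWithinAt f d (Set.Ico 0 t) t := hf.mono hsub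
  rw [hasDerivWithinAt_iff_tendsto_slope] at h2
  have hdiff : Set.Ico (0 : ℝ) t \ {t} = Set.Ico 0 t := by
    apply Set.diff_singleton_eq_self
    simp [Set.mem_Ico]
  rw [hdiff] at h2
  have hne : (𝓝[Set.Ico (0 : ℝ) t] t).NeBot := by
    rw [← mem_closure_iff_nhdsWithin_neBot, closure_Ico (ne_of_lt ht)]
    exact ⟨le_of_lt ht, le_refl t⟩
  refine ge_of_tendsto h2 ?_
  refine Filter.eventually_of_mem self_mem_nhdsWithin ?_
  intro y hy
  have h1 : f y - f t ≤ 0 := by rw [hft]; simpa using hle y hy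
  have h2' : y - t < 0 := sub_neg.mpr hy.2
  have h3 := div_nonneg (neg_nonneg.2 h1) (neg_nonneg.2 h2'.le)
  rw [neg_div_neg_eq] at h3
  rwa [slope_def_field]

/-- One-sided comparison: `φ t i ≤ M + G * u i`. -/
lemma duhamel_one_side {S : Type*} [Fintype S] [Nonempty S] [DecidableEq S]
    (A : S → S → ℝ) (hA1 : ∀ i j, i ≠ j → 0 ≤ A i j) (hA2 : ∀ i, ∑ j, A i j ≤ 0)
    (D : Finset S) (u : S → ℝ) (hu0 : ∀ i, 0 ≤ u i)
    (hu : ∀ i, ∑ j, A i j * u j = -(if i ∈ D then 1 else 0))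
    (M G : ℝ) (hM : 0 ≤ M) (hG : 0 ≤ G)
    (t0 : ℝ) (ht0 : 0 ≤ t0)
    (g : ℝ → S → ℝ)
    (hgb : ∀ s ∈ Set.Icc 0 t0, ∀ i, g s i ≤ G * (if i ∈ D then 1 else 0))
    (φ : ℝ → S → ℝ) (hφ0 : ∀ i, φ 0 i ≤ M)
    (hφ : ∀ t, 0 ≤ t → ∀ i, HasDerivWithinAt (fun s => φ s i)
      ((∑ j, A i j * φ t j) + g t i) (Set.Ici 0) t) :
    ∀ i, φ t0 i ≤ M + G * u i := by
  -- continuity of each component of φ on [0, ∞)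
  have hφcont : ∀ i, ContinuousOn (fun s => φ s i) (Set.Ici 0) := by
    intro i s hs
    exact (hφ s hs i).continuousWithinAt
  -- main step: for all ε > 0, φ t0 i ≤ M + G * u i + ε * (1 + t0)
  have key : ∀ ε : ℝ, 0 < ε → ∀ i, φ t0 i < M + G * u i + ε * (1 + t0) := by
    intro ε hε
    by_contra hcon
    push_neg at hcon
    obtain ⟨i0, hi0⟩ := hcon
    -- w s i = φ s i - M - G * u i - ε * (1 + s)
    set w : ℝ → S → ℝ := fun s i => φ s i - (M + G * u i) - ε * (1 + s) with hw
    have hwcont : ∀ i, ContinuousOn (fun s => w s i) (Set.Icc 0 t0) := by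
      intro i
      apply ContinuousOn.sub
      · exact ((hφcont i).mono Set.Icc_subset_Ici_self).sub continuousOn_const
      · exact (continuousOn_const.add continuousOn_id).const_smul ε
    set E : Set ℝ := Set.Icc 0 t0 ∩ (⋃ i : S, {s | 0 ≤ w s i}) with hE
    have hEclosed : IsClosed E := by
      have : E = ⋃ i : S, (Set.Icc 0 t0 ∩ (fun s => w s i) ⁻¹' Set.Ici 0) := by
        ext x
        simp only [hE, Set.mem_inter_iff, Set.mem_iUnion, Set.mem_setOf_eq,
          Set.mem_preimage, Set.mem_Ici]
        tauto
      rw [this]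
      exact isClosed_iUnion_of_finite fun i =>
        (hwcont i).preimage_isClosed_of_isClosed isClosed_Icc isClosed_Ici
    have ht0E : t0 ∈ E := by
      refine ⟨⟨ht0, le_refl _⟩, Set.mem_iUnion.mpr ⟨i0, ?_⟩⟩
      simp only [Set.mem_setOf_eq, hw]
      linarith
    have hEne : E.Nonempty := ⟨t0, ht0E⟩
    have hEbdd : BddBelow E := ⟨0, fun x hx => hx.1.1⟩
    set T := sInf E with hT
    have hTE : T ∈ E := hEclosed.csInf_mem hEne hEbdd
    have hT0 : 0 ≤ T := hTE.1.1
    have hTt0 : T ≤ t0 := hTE.1.2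
    -- T > 0 since w 0 i < 0 for all i
    have hw0 : ∀ i, w 0 i < 0 := by
      intro i
      have := hφ0 i
      have := hu0 i
      have hGu : 0 ≤ G * u i := mul_nonneg hG (hu0 i)
      simp only [hw]
      nlinarith
    have hTpos : 0 < T := by
      rcases lt_or_eq_of_le hT0 with h | h
      · exact h
      · exfalso
        obtain ⟨_, hmem⟩ := hTE
        obtain ⟨i, hi⟩ := Set.mem_iUnion.mp hmem
        rw [← h] at hi
        exact absurd hi (not_le.mpr (hw0 i))
    -- on [0,T), all coordinates of w are negative
    have hbefore : ∀ s ∈ Set.Ico 0 T, ∀ i, w s i < 0 := by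
      intro s hs i
      by_contra hcon2
      push_neg at hcon2
      have hsE : s ∈ E := ⟨⟨hs.1, le_trans (le_of_lt hs.2) hTt0⟩,
        Set.mem_iUnion.mpr ⟨i, hcon2⟩⟩
      exact absurd (csInf_le hEbdd hsE) (not_le.mpr hs.2)
    -- all coordinates at T are ≤ 0 (limit from the left)
    have hatT : ∀ i, w T i ≤ 0 := by
      intro i
      have hcw : ContinuousWithinAt (fun s => w s i) (Set.Ico 0 T) T := by
        have := (hwcont i) T ⟨hT0, hTt0⟩
        exact this.mono (fun x hx => ⟨hx.1, le_trans (le_of_lt hx.2) hTt0⟩)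
      have hne : (𝓝[Set.Ico (0 : ℝ) T] T).NeBot := by
        rw [← mem_closure_iff_nhdsWithin_neBot, closure_Ico (ne_of_lt hTpos)]
        exact ⟨hT0, le_refl T⟩
      refine le_of_tendsto hcw ?_
      exact Filter.eventually_of_mem self_mem_nhdsWithin
        (fun y hy => le_of_lt (hbefore y hy i))
    -- some coordinate at T equals 0
    obtain ⟨i, hi⟩ := Set.mem_iUnion.mp hTE.2
    have hwTi : w T i = 0 := le_antisymm (hatT i) hi
    -- derivative of w (·) i at T within Ici 0
    set d : ℝ := ((∑ j, A i j * φ T j) + g T i) - ε with hd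
    have hder : HasDerivWithinAt (fun s => w s i) d (Set.Ici 0) T := by
      have h1 := (hφ T hT0 i).sub_const (M + G * u i)
      have h2 : HasDerivWithinAt (fun s : ℝ => ε * (1 + s)) ε (Set.Ici 0) T := by
        simpa using ((hasDerivAt_id T).const_add (1 : ℝ)).const_mul ε |>.hasDerivWithinAt
      exact h1.sub h2
    -- derivative is nonnegative by the hitting lemma
    have hd_nonneg : 0 ≤ d :=
      deriv_nonneg_of_hit (fun s => w s i) T hTpos d hder hwTi
        (fun s hs => le_of_lt (hbefore s hs i))
    -- but derivative is < 0: compute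
    have hphiT : ∀ j, φ T j = w T j + (M + G * u j) + ε * (1 + T) := by
      intro j; simp [hw]; ring
    have hsum : ∑ j, A i j * φ T j
        = (∑ j, A i j * w T j) + (M + ε * (1 + T)) * (∑ j, A i j)
          + G * (∑ j, A i j * u j) := by
      calc ∑ j, A i j * φ T j
          = ∑ j, (A i j * w T j + (M + ε * (1 + T)) * A i j + G * (A i j * u j)) :=
            Finset.sum_congr rfl fun j _ => by rw [hphiT j]; ring
        _ = _ := by
            rw [Finset.sum_add_distrib, Finset.sum_add_distrib, ← Finset.mul_sum,
              ← Finset.mul_sum]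
    have hterm1 : ∑ j, A i j * w T j ≤ 0 := by
      apply Finset.sum_nonpos
      intro j _
      by_cases hji : j = i
      · rw [hji, hwTi, mul_zero]
      · exact mul_nonpos_of_nonneg_of_nonpos (hA1 i j (Ne.symm hji)) (hatT j)
    have hterm2 : (M + ε * (1 + T)) * (∑ j, A i j) ≤ 0 := by
      apply mul_nonpos_of_nonneg_of_nonpos _ (hA2 i)
      have : 0 ≤ ε * (1 + T) := mul_nonneg (le_of_lt hε) (by linarith)
      linarith
    have hterm3 : G * (∑ j, A i j * u j) = -(G * (if i ∈ D then 1 else 0)) := by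
      rw [hu i]; ring
    have hgbd : g T i ≤ G * (if i ∈ D then 1 else 0) := hgb T ⟨hT0, hTt0⟩ i
    have : d < 0 := by
      rw [hd, hsum, hterm3]
      have h3 : g T i - G * (if i ∈ D then 1 else 0) ≤ 0 := by linarith
      linarith
    linarith
  -- conclude by letting ε → 0
  intro i
  by_contra hcon
  push_neg at hcon
  set δ := φ t0 i - (M + G * u i) with hδ
  have hδpos : 0 < δ := by linarith
  have h1t0 : (0:ℝ) < 1 + t0 := by linarith
  have := key (δ / (2 * (1 + t0))) (by positivity) i
  have : δ / (2 * (1 + t0)) * (1 + t0) = δ / 2 := by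
    field_simp
  have hk := key (δ / (2 * (1 + t0))) (by positivity) i
  rw [this] at hk
  linarith

/-- (Deterministic Duhamel-plus-occupation-time estimate.) Let `S` be a
finite set and `A` a substochastic generator matrix on `S` (nonnegative off-diagonal
entries, nonpositive row sums). Let `u ≥ 0` solve `A u = −1_D`, let `g` be continuous on
`[0,∞)` and supported on `D`, and let `φ` solve `φ' = A φ + g` on `[0,∞)`. Then for every
`t ≥ 0`, `max_i |φ_t(i)| ≤ max_i |φ_0(i)| + (sup_{0≤s≤t} max_{i∈D} |g_s(i)|)·max_i u(i)`. -/
theorem duhamel_occupation_estimate {S : Type*} [Fintype S] [Nonempty S] [DecidableEq S]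
    (A : S → S → ℝ) (hA1 : ∀ i j, i ≠ j → 0 ≤ A i j) (hA2 : ∀ i, ∑ j, A i j ≤ 0)
    (D : Finset S) (u : S → ℝ) (hu0 : ∀ i, 0 ≤ u i)
    (hu : ∀ i, ∑ j, A i j * u j = -(if i ∈ D then 1 else 0))
    (g : ℝ → S → ℝ) (hgcont : ContinuousOn g (Set.Ici 0))
    (hgD : ∀ t, 0 ≤ t → ∀ i, i ∉ D → g t i = 0)
    (φ : ℝ → S → ℝ)
    (hφ : ∀ t, 0 ≤ t → ∀ i, HasDerivWithinAt (fun s => φ s i)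
      ((∑ j, A i j * φ t j) + g t i) (Set.Ici 0) t) :
    ∀ t, 0 ≤ t → ∀ i, |φ t i| ≤
      (⨆ j, |φ 0 j|)
        + (⨆ s : Set.Icc (0 : ℝ) t, ⨆ j : D, |g (s : ℝ) (j : S)|) * ⨆ j, u j := by
  intro t ht i
  haveI : Nonempty (Set.Icc (0:ℝ) t) := ⟨⟨0, le_refl 0, ht⟩⟩
  set M := ⨆ j, |φ 0 j| with hMdef
  set G := ⨆ s : Set.Icc (0 : ℝ) t, ⨆ j : D, |g (s : ℝ) (j : S)| with hGdef
  set U := ⨆ j, u j with hUdef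
  -- basic facts about M
  have hMb : ∀ j, |φ 0 j| ≤ M :=
    fun j => le_ciSup (f := fun j => |φ 0 j|) (Set.Finite.bddAbove (Set.finite_range _)) j
  have hM0 : 0 ≤ M := le_trans (abs_nonneg _) (hMb (Classical.arbitrary S))
  -- basic facts about U
  have hUb : ∀ j, u j ≤ U :=
    fun j => le_ciSup (f := u) (Set.Finite.bddAbove (Set.finite_range _)) j
  -- facts about G: 0 ≤ G, and |g s i| ≤ G for s ∈ [0,t], i ∈ D
  have hGfacts : 0 ≤ G ∧ ∀ s ∈ Set.Icc (0:ℝ) t, ∀ i ∈ D, |g s i| ≤ G := by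
    by_cases hD : D.Nonempty
    · haveI : Nonempty {x // x ∈ D} := ⟨⟨hD.choose, hD.choose_spec⟩⟩
      -- the inner sup is bounded by the sum of absolute values
      set F : ℝ → ℝ := fun s => ∑ j : {x // x ∈ D}, |g s (j : S)| with hF
      have hFcont : ContinuousOn F (Set.Icc 0 t) := by
        apply continuousOn_finset_sum
        intro j _
        exact (((continuous_apply (j : S)).comp_continuousOn hgcont).mono
          Set.Icc_subset_Ici_self).abs
      obtain ⟨C, hC⟩ := (isCompact_Icc.image_of_continuousOn hFcont).bddAbove
      have hCb : ∀ s ∈ Set.Icc (0:ℝ) t, F s ≤ C :=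
        fun s hs => hC (Set.mem_image_of_mem F hs)
      have hinner_le : ∀ s : Set.Icc (0:ℝ) t, (⨆ j : D, |g (s:ℝ) (j:S)|) ≤ C := by
        intro s
        apply ciSup_le
        intro j
        calc |g (s:ℝ) (j:S)| ≤ F (s:ℝ) :=
              Finset.single_le_sum (f := fun k : {x // x ∈ D} => |g (s:ℝ) (k:S)|)
                (fun k _ => abs_nonneg _) (Finset.mem_univ j)
          _ ≤ C := hCb _ s.2
      have hGbdd : BddAbove (Set.range fun s : Set.Icc (0:ℝ) t =>
          ⨆ j : D, |g (s:ℝ) (j:S)|) := by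
        refine ⟨C, ?_⟩
        rintro _ ⟨s, rfl⟩
        exact hinner_le s
      have hmem : ∀ s ∈ Set.Icc (0:ℝ) t, ∀ i ∈ D, |g s i| ≤ G := by
        intro s hs i hi
        have h1 : |g s i| ≤ ⨆ j : D, |g s (j : S)| :=
          le_ciSup (f := fun j : D => |g s (j:S)|)
            (Set.Finite.bddAbove (Set.finite_range _)) (⟨i, hi⟩ : D)
        have h2 : (⨆ j : D, |g s (j : S)|) ≤ G :=
          le_ciSup hGbdd (⟨s, hs⟩ : Set.Icc (0:ℝ) t)
        exact le_trans h1 h2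
      refine ⟨?_, hmem⟩
      have := hmem 0 ⟨le_refl 0, ht⟩ hD.choose hD.choose_spec
      exact le_trans (abs_nonneg _) this
    · -- D empty: inner sup is 0, so G = 0; and no i ∈ D
      haveI : IsEmpty {x // x ∈ D} := by
        rw [Finset.not_nonempty_iff_eq_empty] at hD
        subst hD
        exact ⟨fun x => absurd x.2 (Finset.notMem_empty _)⟩
      have hzero : ∀ s : Set.Icc (0:ℝ) t, (⨆ j : D, |g (s:ℝ) (j:S)|) = 0 := by
        intro s
        rw [iSup_of_empty', Real.sSup_empty]
      have : G = 0 := by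
        rw [hGdef]
        calc (⨆ s : Set.Icc (0:ℝ) t, ⨆ j : D, |g (s:ℝ) (j:S)|)
            = ⨆ _ : Set.Icc (0:ℝ) t, (0:ℝ) := by
              congr 1; funext s; exact hzero s
          _ = 0 := ciSup_const
      refine ⟨le_of_eq this.symm, ?_⟩
      intro s hs j hj
      rw [Finset.not_nonempty_iff_eq_empty] at hD
      subst hD
      exact absurd hj (Finset.notMem_empty _)
  obtain ⟨hG0, hGb⟩ := hGfacts
  -- pointwise bound on g and -g
  have hgb : ∀ s ∈ Set.Icc (0:ℝ) t, ∀ i, g s i ≤ G * (if i ∈ D then 1 else 0) := by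
    intro s hs i
    by_cases hi : i ∈ D
    · simp only [hi, if_true, mul_one]
      exact le_trans (le_abs_self _) (hGb s hs i hi)
    · simp only [hi, if_false, mul_zero]
      rw [hgD s hs.1 i hi]
  have hgb' : ∀ s ∈ Set.Icc (0:ℝ) t, ∀ i, -g s i ≤ G * (if i ∈ D then 1 else 0) := by
    intro s hs i
    by_cases hi : i ∈ D
    · simp only [hi, if_true, mul_one]
      exact le_trans (neg_le_abs _) (hGb s hs i hi)
    · simp only [hi, if_false, mul_zero]
      rw [hgD s hs.1 i hi]; simp
  -- apply the one-sided lemma to φ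
  have hup : φ t i ≤ M + G * u i :=
    duhamel_one_side A hA1 hA2 D u hu0 hu M G hM0 hG0 t ht g hgb φ
      (fun j => le_trans (le_abs_self _) (hMb j)) hφ i
  -- apply the one-sided lemma to -φ with source -g
  have hφneg : ∀ s, 0 ≤ s → ∀ j, HasDerivWithinAt (fun r => -φ r j)
      ((∑ k, A j k * (-φ s k)) + (-g s j)) (Set.Ici 0) s := by
    intro s hs j
    have := (hφ s hs j).neg
    have heq : -((∑ k, A j k * φ s k) + g s j)
        = (∑ k, A j k * (-φ s k)) + (-g s j) := by
      rw [neg_add, ← Finset.sum_neg_distrib]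
      congr 1
      apply Finset.sum_congr rfl
      intro k _
      ring
    rwa [heq] at this
  have hdown : -φ t i ≤ M + G * u i :=
    duhamel_one_side A hA1 hA2 D u hu0 hu M G hM0 hG0 t ht (fun s j => -g s j)
      hgb' (fun s j => -φ s j)
      (fun j => le_trans (neg_le_abs _) (hMb j)) hφneg i
  have habs : |φ t i| ≤ M + G * u i := abs_le.mpr ⟨by linarith, hup⟩
  calc |φ t i| ≤ M + G * u i := habs
    _ ≤ M + G * U := by
        have := mul_le_mul_of_nonneg_left (hUb i) hG0
        linarith
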